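/- For the Moran fixation probability ρ(s) = (1 - 1/(1+s)) / (1 - 1/(1+s)^N) with population size N ≥ 1 and selective advantage s > 0, the ratio between the fixation probability of an advantageous mutant and that of the corresponding disadvantageous mutant satisfies ρ(s) / ρ(-s/(1+s)) = (1+s)^(N-1). -/

import Mathlib

/-- Moran fixation probability for a mutant with selective advantage `t`
in a population of size `N`. -/
noncomputable def moranRho (N : ℕ) (t : ℝ) : ℝ :=
  (1 - 1 / (1 + t)) / (1 - 1 / (1 + t) ^ N)

theorem moran_ratio (N : ℕ) (hN : 1 ≤ N) (s : ℝ) (hs : 0 < s) :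
    moranRho N s / moranRho N (-s / (1 + s)) = (1 + s) ^ (N - 1) := by
  have hu : (1:ℝ) < 1 + s := by linarith
  have hu0 : (1 + s) ≠ 0 := by linarith
  obtain ⟨M, rfl⟩ : ∃ M, N = M + 1 := ⟨N - 1, by omega⟩
  have hupN : (1:ℝ) < (1 + s) ^ (M + 1) := one_lt_pow₀ hu (by omega)
  have h2 : (1 + s) ^ (M + 1) - 1 ≠ 0 := by linarith
  have key : 1 + (-s / (1 + s)) = 1 / (1 + s) := by field_simp; ring
  rw [moranRho, moranRho, key]
  rw [div_pow, one_pow, one_div_one_div, one_div_one_div]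
  simp only [Nat.add_sub_cancel]
  have h3 : (1 + s) ^ (M+1) ≠ 0 := by positivity
  have hs0 : (1:ℝ) - (1 + s) ≠ 0 := by linarith
  field_simp
  ring_nf
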